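/- Let X be a λ-star set of a graph G without isolated vertices, with blocks N and B = C − λI, let v ∈ X and y_v = B⁻¹ N e_v. If u ∈ X̄ satisfies (y_v)_u ≠ 0, then X′ = (X \ {v}) ∪ {u} is also a λ-star set of G. -/

import Mathlib

open Matrix

noncomputable def eigSpace {m : Type*} [Fintype m] [DecidableEq m]
    (A : Matrix m m ℝ) (lam : ℝ) : Submodule ℝ (m → ℝ) :=
  LinearMap.ker (Matrix.mulVecLin (A - lam • (1 : Matrix m m ℝ)))

/-- `lam` is an eigenvalue of the real matrix `A`. -/
def IsEig {m : Type*} [Fintype m] [DecidableEq m] (A : Matrix m m ℝ) (lam : ℝ) : Prop :=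
  eigSpace A lam ≠ ⊥

/-- The multiplicity of `lam` as an eigenvalue of `A`. -/
noncomputable def multE {m : Type*} [Fintype m] [DecidableEq m]
    (A : Matrix m m ℝ) (lam : ℝ) : ℕ :=
  Module.finrank ℝ (eigSpace A lam)

/-- `lam` is a main eigenvalue of `A`: its eigenspace is not orthogonal to the all-ones
vector. -/
def IsMainEig {m : Type*} [Fintype m] [DecidableEq m] (A : Matrix m m ℝ) (lam : ℝ) : Prop :=
  ∃ x ∈ eigSpace A lam, ∑ i, x i ≠ 0

/-- The adjacency matrix of the subgraph of `G` induced by the vertex set `S`. -/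
def indMatrix {n : ℕ} (G : SimpleGraph (Fin n)) [DecidableRel G.Adj] (S : Finset (Fin n)) :
    Matrix S S ℝ :=
  (G.adjMatrix ℝ).submatrix (fun i => (i : Fin n)) (fun j => (j : Fin n))

/-- `X` is a `lam`-star set of `G`: its cardinality equals the multiplicity of `lam`
and `lam` is not an eigenvalue of the subgraph induced by the complement of `X`. -/
def IsStarSet {n : ℕ} (G : SimpleGraph (Fin n)) [DecidableRel G.Adj] (lam : ℝ)
    (X : Finset (Fin n)) : Prop :=
  X.card = multE (G.adjMatrix ℝ) lam ∧ ¬ IsEig (indMatrix G Xᶜ) lam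

/-- The block `N` of the adjacency matrix: rows indexed by `Xᶜ`, columns by `X`. -/
def Nmat {n : ℕ} (G : SimpleGraph (Fin n)) [DecidableRel G.Adj] (X : Finset (Fin n)) :
    Matrix ↥(Xᶜ) ↥X ℝ :=
  (G.adjMatrix ℝ).submatrix (fun i => (i : Fin n)) (fun j => (j : Fin n))

/-- The block `C` of the adjacency matrix: the adjacency matrix of `G - X`. -/
def Cmat {n : ℕ} (G : SimpleGraph (Fin n)) [DecidableRel G.Adj] (X : Finset (Fin n)) :
    Matrix ↥(Xᶜ) ↥(Xᶜ) ℝ :=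
  indMatrix G Xᶜ

section helpers

variable {n : ℕ} (G : SimpleGraph (Fin n)) [DecidableRel G.Adj] (lam : ℝ)

lemma mem_eigSpace_iff {m : Type*} [Fintype m] [DecidableEq m] (B : Matrix m m ℝ) (z : m → ℝ) :
    z ∈ eigSpace B lam ↔ (B - lam • 1) *ᵥ z = 0 := by
  simp only [eigSpace, LinearMap.mem_ker, Matrix.mulVecLin_apply]

/-- Splitting the eigen-equation of the big matrix along the partition `S ∪ Sᶜ`. -/
lemma block_split (S : Finset (Fin n)) (z : Fin n → ℝ) (i : Fin n) (hi : i ∈ Sᶜ) :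
    ((G.adjMatrix ℝ - lam • 1) *ᵥ z) i
      = ((indMatrix G Sᶜ - lam • (1 : Matrix ↥(Sᶜ) ↥(Sᶜ) ℝ)) *ᵥ fun j : ↥(Sᶜ) => z j) ⟨i, hi⟩
        + ∑ j ∈ S, (G.adjMatrix ℝ) i j * z j := by
  classical
  have hsum : ((G.adjMatrix ℝ - lam • 1) *ᵥ z) i
      = ∑ j, ((G.adjMatrix ℝ) i j - lam * (if i = j then 1 else 0)) * z j := by
    simp [Matrix.mulVec, dotProduct, Matrix.sub_apply, Matrix.one_apply]
  rw [hsum, ← Finset.sum_compl_add_sum S]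
  congr 1
  · rw [← Finset.sum_coe_sort (Sᶜ)]
    simp only [Matrix.mulVec, dotProduct, Matrix.sub_apply, Matrix.smul_apply,
      Matrix.one_apply]
    refine Finset.sum_congr rfl fun j _ => ?_
    have hij : (i = (j : Fin n)) ↔ ((⟨i, hi⟩ : ↥(Sᶜ)) = j) := by
      constructor
      · intro hij; exact Subtype.ext hij
      · intro hij; exact congrArg Subtype.val hij
    simp only [indMatrix, Matrix.submatrix_apply, smul_eq_mul]
    by_cases hc : (⟨i, hi⟩ : ↥(Sᶜ)) = j
    · simp [hc, ← hij.mpr hc, hij]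
    · rw [if_neg hc, if_neg (fun hh => hc (hij.mp hh))]
  · refine Finset.sum_congr rfl fun j hj => ?_
    have : i ≠ j := fun hij => (Finset.mem_compl.mp hi) (hij ▸ hj)
    rw [if_neg this]
    ring

/-- If `lam` is not an eigenvalue of `G - S`, then an eigenvector of `G` vanishing on `S`
vanishes everywhere. -/
lemma eig_eq_zero_of_star (S : Finset (Fin n)) (hS : ¬ IsEig (indMatrix G Sᶜ) lam)
    (z : Fin n → ℝ) (hz : z ∈ eigSpace (G.adjMatrix ℝ) lam)
    (h0 : ∀ i ∈ S, z i = 0) : z = 0 := by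
  classical
  have hker : eigSpace (indMatrix G Sᶜ) lam = ⊥ := not_not.mp hS
  have hy : (fun j : ↥(Sᶜ) => z j) ∈ eigSpace (indMatrix G Sᶜ) lam := by
    rw [mem_eigSpace_iff]
    funext j
    obtain ⟨i, hi⟩ := j
    have hzi := congrFun ((mem_eigSpace_iff lam _ z).mp hz) i
    rw [block_split G lam S z i hi] at hzi
    have h2 : ∑ j ∈ S, (G.adjMatrix ℝ) i j * z j = 0 :=
      Finset.sum_eq_zero fun j hj => by rw [h0 j hj, mul_zero]
    rw [h2, add_zero] at hzi
    simpa using hzi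
  have hy0 : (fun j : ↥(Sᶜ) => z j) = 0 := by
    rw [hker, Submodule.mem_bot] at hy; exact hy
  funext i
  by_cases hi : i ∈ S
  · exact h0 i hi
  · exact congrFun hy0 ⟨i, Finset.mem_compl.mpr hi⟩

/-- If the restriction of the eigenspace to `S` is injective and `|S|` equals the
multiplicity, then the restriction is surjective. -/
lemma res_surj (S : Finset (Fin n)) (hcard : S.card = multE (G.adjMatrix ℝ) lam)
    (hinj : ∀ z ∈ eigSpace (G.adjMatrix ℝ) lam, (∀ i ∈ S, z i = 0) → z = 0) :
    ∀ w : ↥S → ℝ, ∃ z ∈ eigSpace (G.adjMatrix ℝ) lam, ∀ i : ↥S, z i = w i := by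
  classical
  set E := eigSpace (G.adjMatrix ℝ) lam with hE
  let f : E →ₗ[ℝ] (↥S → ℝ) :=
    (LinearMap.funLeft ℝ ℝ (fun i : ↥S => (i : Fin n))).comp E.subtype
  have hfinj : Function.Injective f := by
    intro z1 z2 h12
    apply Subtype.ext
    have hmem : (z1 : Fin n → ℝ) - z2 ∈ E := sub_mem z1.2 z2.2
    have hvan : ∀ i ∈ S, ((z1 : Fin n → ℝ) - z2) i = 0 := by
      intro i hi
      have := congrFun h12 ⟨i, hi⟩
      simpa [f, LinearMap.funLeft, sub_eq_zero] using this
    have := hinj _ hmem hvan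
    exact sub_eq_zero.mp this
  have hdim : Module.finrank ℝ E = Module.finrank ℝ (↥S → ℝ) := by
    rw [Module.finrank_fintype_fun_eq_card, Fintype.card_coe]
    exact (hcard).symm
  have hfsurj : Function.Surjective f :=
    (LinearMap.injective_iff_surjective_of_finrank_eq_finrank hdim).mp hfinj
  intro w
  obtain ⟨z, hzw⟩ := hfsurj w
  exact ⟨z, z.2, fun i => congrFun hzw i⟩

/-- If `lam` is not an eigenvalue of the induced subgraph, the corresponding block is
invertible. -/
lemma B_unit (S : Finset (Fin n)) (hS : ¬ IsEig (indMatrix G Sᶜ) lam) :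
    IsUnit (indMatrix G Sᶜ - lam • (1 : Matrix ↥(Sᶜ) ↥(Sᶜ) ℝ)) := by
  rw [← Matrix.mulVec_injective_iff_isUnit]
  intro w1 w2 heq
  have hker : eigSpace (indMatrix G Sᶜ) lam = ⊥ := not_not.mp hS
  have hmem : w1 - w2 ∈ eigSpace (indMatrix G Sᶜ) lam := by
    rw [mem_eigSpace_iff, Matrix.mulVec_sub, heq, sub_self]
  rw [hker, Submodule.mem_bot, sub_eq_zero] at hmem
  exact hmem

end helpers

theorem stmt9 {n : ℕ} (G : SimpleGraph (Fin n)) [DecidableRel G.Adj] (lam : ℝ)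
    (hiso : ∀ v : Fin n, ∃ u, G.Adj v u)
    (X : Finset (Fin n)) (hX : IsStarSet G lam X)
    (v : Fin n) (hv : v ∈ X) (u : Fin n) (hu : u ∈ Xᶜ)
    (h : ((Cmat G X - lam • 1)⁻¹ *ᵥ fun i : ↥(Xᶜ) => Nmat G X i ⟨v, hv⟩) ⟨u, hu⟩ ≠ 0) :
    IsStarSet G lam (insert u (X.erase v)) := by
  classical
  obtain ⟨hcard, hnot⟩ := hX
  set X' : Finset (Fin n) := insert u (X.erase v) with hX'def
  have huX : u ∉ X := Finset.mem_compl.mp hu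
  have hcard' : X'.card = X.card := by
    have h1 : u ∉ X.erase v := fun hmem => huX (Finset.mem_of_mem_erase hmem)
    have h2 : 0 < X.card := Finset.card_pos.mpr ⟨v, hv⟩
    rw [hX'def, Finset.card_insert_of_notMem h1, Finset.card_erase_of_mem hv]
    omega
  -- the block B = C - lam I is invertible
  have hBunit : IsUnit (indMatrix G Xᶜ - lam • (1 : Matrix ↥(Xᶜ) ↥(Xᶜ) ℝ)) :=
    B_unit G lam X hnot
  -- Key injectivity: an eigenvector vanishing on X' vanishes everywhere
  have hinj' : ∀ z ∈ eigSpace (G.adjMatrix ℝ) lam, (∀ i ∈ X', z i = 0) → z = 0 := by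
    intro z hz h0
    have hzu : z u = 0 := h0 u (Finset.mem_insert_self _ _)
    have hzerase : ∀ i ∈ X, i ≠ v → z i = 0 := fun i hi hiv =>
      h0 i (Finset.mem_insert_of_mem (Finset.mem_erase.mpr ⟨hiv, hi⟩))
    -- show z v = 0
    have hzv : z v = 0 := by
      have hBy : (indMatrix G Xᶜ - lam • (1 : Matrix ↥(Xᶜ) ↥(Xᶜ) ℝ)) *ᵥ (fun j : ↥(Xᶜ) => z j)
          = (-(z v)) • (fun i : ↥(Xᶜ) => Nmat G X i ⟨v, hv⟩) := by
        funext j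
        obtain ⟨i, hi⟩ := j
        have hzi := congrFun ((mem_eigSpace_iff lam _ z).mp hz) i
        rw [block_split G lam X z i hi] at hzi
        simp only [Pi.zero_apply] at hzi
        have hsum : ∑ j ∈ X, (G.adjMatrix ℝ) i j * z j = (G.adjMatrix ℝ) i v * z v := by
          refine Finset.sum_eq_single_of_mem v hv fun j hj hjv => ?_
          rw [hzerase j hj hjv, mul_zero]
        rw [hsum] at hzi
        have heq := eq_neg_of_add_eq_zero_left hzi
        rw [heq]
        simp only [Pi.smul_apply, smul_eq_mul, Nmat, Matrix.submatrix_apply]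
        ring
      have hyinv : (fun j : ↥(Xᶜ) => z j)
          = (-(z v)) • ((indMatrix G Xᶜ - lam • (1 : Matrix ↥(Xᶜ) ↥(Xᶜ) ℝ))⁻¹ *ᵥ
              fun i : ↥(Xᶜ) => Nmat G X i ⟨v, hv⟩) := by
        have h1 : (indMatrix G Xᶜ - lam • (1 : Matrix ↥(Xᶜ) ↥(Xᶜ) ℝ))⁻¹ *ᵥ
            ((indMatrix G Xᶜ - lam • (1 : Matrix ↥(Xᶜ) ↥(Xᶜ) ℝ)) *ᵥ (fun j : ↥(Xᶜ) => z j))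
            = (fun j : ↥(Xᶜ) => z j) := by
          rw [Matrix.mulVec_mulVec,
            Matrix.nonsing_inv_mul _ ((Matrix.isUnit_iff_isUnit_det _).mp hBunit),
            Matrix.one_mulVec]
        rw [← h1, hBy, Matrix.mulVec_smul]
      have hcu := congrFun hyinv ⟨u, hu⟩
      simp only [Pi.smul_apply, smul_eq_mul] at hcu
      rw [hzu] at hcu
      have hmul : -(z v) * (((indMatrix G Xᶜ - lam • (1 : Matrix ↥(Xᶜ) ↥(Xᶜ) ℝ))⁻¹ *ᵥ
          fun i : ↥(Xᶜ) => Nmat G X i ⟨v, hv⟩) ⟨u, hu⟩) = 0 := hcu.symm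
      have hne : (((indMatrix G Xᶜ - lam • (1 : Matrix ↥(Xᶜ) ↥(Xᶜ) ℝ))⁻¹ *ᵥ
          fun i : ↥(Xᶜ) => Nmat G X i ⟨v, hv⟩) ⟨u, hu⟩) ≠ 0 := h
      rcases mul_eq_zero.mp hmul with h' | h'
      · linarith [h']
      · exact absurd h' hne
    -- so z vanishes on all of X, hence z = 0
    refine eig_eq_zero_of_star G lam X hnot z hz fun i hi => ?_
    by_cases hiv : i = v
    · rw [hiv]; exact hzv
    · exact hzerase i hi hiv
  have hcardX' : X'.card = multE (G.adjMatrix ℝ) lam := hcard'.trans hcard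
  refine ⟨hcardX', ?_⟩
  have hsurj' := res_surj G lam X' hcardX' hinj'
  rw [IsEig, not_not, Submodule.eq_bot_iff]
  intro y hy
  -- extend y by zero to all of Fin n
  set yt : Fin n → ℝ := fun i => if hm : i ∈ X'ᶜ then y ⟨i, hm⟩ else 0 with hytdef
  have hytX' : ∀ i ∈ X', yt i = 0 := fun i hi =>
    dif_neg (fun hc => (Finset.mem_compl.mp hc) hi)
  have hytc : (fun j : ↥(X'ᶜ) => yt j) = y := by
    funext j; exact dif_pos j.2
  set w : Fin n → ℝ := (G.adjMatrix ℝ - lam • 1) *ᵥ yt with hwdef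
  have hw0 : ∀ i ∈ X'ᶜ, w i = 0 := by
    intro i hi
    rw [hwdef, block_split G lam X' yt i hi, hytc]
    have h2 : ∑ j ∈ X', (G.adjMatrix ℝ) i j * yt j = 0 :=
      Finset.sum_eq_zero fun j hj => by rw [hytX' j hj, mul_zero]
    rw [h2, add_zero]
    have := congrFun ((mem_eigSpace_iff lam _ y).mp hy) ⟨i, hi⟩
    simpa using this
  have horth : ∀ z ∈ eigSpace (G.adjMatrix ℝ) lam, z ⬝ᵥ w = 0 := by
    intro z hz
    rw [hwdef, Matrix.dotProduct_mulVec]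
    have hsym : (G.adjMatrix ℝ - lam • 1)ᵀ = G.adjMatrix ℝ - lam • 1 := by
      simp [Matrix.transpose_sub, Matrix.transpose_smul]
    have hzv : z ᵥ* (G.adjMatrix ℝ - lam • 1) = 0 := by
      rw [← hsym, Matrix.vecMul_transpose]
      exact (mem_eigSpace_iff lam _ z).mp hz
    rw [hzv, zero_dotProduct]
  obtain ⟨z, hz, hzw⟩ := hsurj' (fun i : ↥X' => w i)
  have hsum0 : ∑ i ∈ X', w i ^ 2 = 0 := by
    have hd := horth z hz
    rw [dotProduct, ← Finset.sum_compl_add_sum X' (fun i => z i * w i)] at hd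
    have hc0 : ∑ i ∈ X'ᶜ, z i * w i = 0 :=
      Finset.sum_eq_zero fun i hi => by rw [hw0 i hi, mul_zero]
    rw [hc0, zero_add] at hd
    rw [← hd]
    refine Finset.sum_congr rfl fun i hi => ?_
    rw [hzw ⟨i, hi⟩]
    ring
  have hwX' : ∀ i ∈ X', w i = 0 := by
    intro i hi
    have := (Finset.sum_eq_zero_iff_of_nonneg (fun i _ => sq_nonneg (w i))).mp hsum0 i hi
    exact pow_eq_zero_iff (two_ne_zero) |>.mp this
  have hwzero : w = 0 := by
    funext i
    by_cases hi : i ∈ X'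
    · exact hwX' i hi
    · exact hw0 i (Finset.mem_compl.mpr hi)
  have hytE : yt ∈ eigSpace (G.adjMatrix ℝ) lam :=
    (mem_eigSpace_iff lam _ yt).mpr (hwdef ▸ hwzero)
  have hyt0 : yt = 0 := hinj' yt hytE hytX'
  funext j
  have h1 := congrFun hytc j
  have h2 := congrFun hyt0 (j : Fin n)
  rw [← h1]
  simpa using h2
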